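/- In a stable configuration structure, for every configuration X, a subset Y ⊆ X is a configuration if and only if Y is left-closed with respect to <_X, i.e., whenever d <_X e and e ∈ Y then d ∈ Y. -/

import Mathlib

universe u v

/-- A configuration structure over event type `E` and label alphabet `L`:
a family of finite sets of events (configurations) with a labelling. -/
structure CS (E : Type u) (L : Type v) where
  C : Set (Set E)
  finite : ∀ X ∈ C, X.Finite
  label : E → L

namespace CS

variable {E E₁ E₂ : Type u} {L : Type v}

/-- Stability: rooted, connected, closed under bounded unions and intersections. -/
def IsStable (𝒞 : CS E L) : Prop :=
  ∅ ∈ 𝒞.C ∧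
  (∀ X ∈ 𝒞.C, X ≠ ∅ → ∃ e ∈ X, X \ {e} ∈ 𝒞.C) ∧
  (∀ X ∈ 𝒞.C, ∀ Y ∈ 𝒞.C, ∀ Z ∈ 𝒞.C, X ∪ Y ⊆ Z → X ∪ Y ∈ 𝒞.C) ∧
  (∀ X ∈ 𝒞.C, ∀ Y ∈ 𝒞.C, ∀ Z ∈ 𝒞.C, X ∪ Y ⊆ Z → X ∩ Y ∈ 𝒞.C)

/-- Causality: `d ≤_X e` iff every sub-configuration of `X` containing `e` contains `d`. -/
def le (𝒞 : CS E L) (X : Set E) (d e : E) : Prop :=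
  ∀ Y ∈ 𝒞.C, Y ⊆ X → e ∈ Y → d ∈ Y

/-- Strict causality `d <_X e`. -/
def lt (𝒞 : CS E L) (X : Set E) (d e : E) : Prop :=
  le 𝒞 X d e ∧ d ≠ e

/-- Concurrency within a configuration. -/
def co (𝒞 : CS E L) (X : Set E) (d e : E) : Prop :=
  ¬ lt 𝒞 X d e ∧ ¬ lt 𝒞 X e d

/-- The set of minimal events of a configuration. -/
def minE (𝒞 : CS E L) (X : Set E) : Set E :=
  {e | e ∈ X ∧ ∀ d ∈ X, ¬ lt 𝒞 X d e}

/-- Depth of an event in a configuration: the length of the longest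
causal chain (w.r.t. `<_X`) in `X` up to and including `e`. -/
noncomputable def depth (𝒞 : CS E L) (X : Set E) (e : E) : ℕ :=
  sSup {n | ∃ l : List E, l.length = n ∧ l.Chain' (lt 𝒞 X) ∧
    (∀ x ∈ l, x ∈ X) ∧ l.getLast? = some e}

/-- Multiset of labels of a (finite) set of events. -/
noncomputable def labelMS (𝒞 : CS E L) (S : Set E) : Multiset L := by
  classical exact if h : S.Finite then h.toFinset.val.map 𝒞.label else 0

/-- Single-event forward transition `X —a→ X'`. -/
def FTrans (𝒞 : CS E L) (a : L) (X X' : Set E) : Prop :=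
  X ∈ 𝒞.C ∧ X' ∈ 𝒞.C ∧ X ⊆ X' ∧ ∃ e, X' \ X = {e} ∧ 𝒞.label e = a

/-- Single-event reverse transition `X ⇝a X'`. -/
def RTrans (𝒞 : CS E L) (a : L) (X X' : Set E) : Prop :=
  FTrans 𝒞 a X' X

/-- Step transition `X —A→ X'`: the added events are pairwise concurrent
in `X'` and carry the label multiset `A`. -/
def Step (𝒞 : CS E L) (A : Multiset L) (X X' : Set E) : Prop :=
  X ∈ 𝒞.C ∧ X' ∈ 𝒞.C ∧ X ⊆ X' ∧ ∃ F : Finset E, ↑F = X' \ X ∧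
    (∀ d ∈ F, ∀ e ∈ F, co 𝒞 X' d e) ∧ F.val.map 𝒞.label = A

/-- Reverse step transition `X ⇝A X'`. -/
def RStep (𝒞 : CS E L) (A : Multiset L) (X X' : Set E) : Prop :=
  Step 𝒞 A X' X

/-- Equidepth step: all added events have the same depth in `X'`. -/
def EqStep (𝒞 : CS E L) (A : Multiset L) (X X' : Set E) : Prop :=
  Step 𝒞 A X X' ∧ ∀ d ∈ X' \ X, ∀ e ∈ X' \ X, depth 𝒞 X' d = depth 𝒞 X' e

/-- Reverse equidepth step `X ⇝A= X'`. -/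
def REqStep (𝒞 : CS E L) (A : Multiset L) (X X' : Set E) : Prop :=
  EqStep 𝒞 A X' X

/-- Single-event forward transition with depth: the new event has label `a`
and depth `k` in `X'`. -/
def FTransD (𝒞 : CS E L) (a : L) (k : ℕ) (X X' : Set E) : Prop :=
  X ∈ 𝒞.C ∧ X' ∈ 𝒞.C ∧ X ⊆ X' ∧
    ∃ e, X' \ X = {e} ∧ 𝒞.label e = a ∧ depth 𝒞 X' e = k

/-- Single-event reverse transition with depth. -/
def RTransD (𝒞 : CS E L) (a : L) (k : ℕ) (X X' : Set E) : Prop :=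
  FTransD 𝒞 a k X' X

/-- A multiset of labels is homogeneous if all its elements are equal. -/
def Hom (A : Multiset L) : Prop := ∀ a ∈ A, ∀ b ∈ A, a = b

/-- `R` is a relation between configurations of `𝒞` and `𝒟`, containing `(∅, ∅)`. -/
def Dom (𝒞 : CS E₁ L) (𝒟 : CS E₂ L) (R : Set E₁ → Set E₂ → Prop) : Prop :=
  R ∅ ∅ ∧ ∀ X Y, R X Y → X ∈ 𝒞.C ∧ Y ∈ 𝒟.C

/-- Interleaving bisimulation. -/
def IsIB (𝒞 : CS E₁ L) (𝒟 : CS E₂ L) (R : Set E₁ → Set E₂ → Prop) : Prop :=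
  Dom 𝒞 𝒟 R ∧ ∀ X Y, R X Y →
    (∀ a X', FTrans 𝒞 a X X' → ∃ Y', FTrans 𝒟 a Y Y' ∧ R X' Y') ∧
    (∀ a Y', FTrans 𝒟 a Y Y' → ∃ X', FTrans 𝒞 a X X' ∧ R X' Y')

/-- Reverse bisimulation: an IB also matching reverse single-event transitions. -/
def IsRB (𝒞 : CS E₁ L) (𝒟 : CS E₂ L) (R : Set E₁ → Set E₂ → Prop) : Prop :=
  IsIB 𝒞 𝒟 R ∧ ∀ X Y, R X Y →
    (∀ a X', RTrans 𝒞 a X X' → ∃ Y', RTrans 𝒟 a Y Y' ∧ R X' Y') ∧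
    (∀ a Y', RTrans 𝒟 a Y Y' → ∃ X', RTrans 𝒞 a X X' ∧ R X' Y')

/-- Step bisimulation. -/
def IsSB (𝒞 : CS E₁ L) (𝒟 : CS E₂ L) (R : Set E₁ → Set E₂ → Prop) : Prop :=
  Dom 𝒞 𝒟 R ∧ ∀ X Y, R X Y →
    (∀ A X', Step 𝒞 A X X' → ∃ Y', Step 𝒟 A Y Y' ∧ R X' Y') ∧
    (∀ A Y', Step 𝒟 A Y Y' → ∃ X', Step 𝒞 A X X' ∧ R X' Y')

/-- Reverse step bisimulation: an SB also matching reverse steps. -/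
def IsRSB (𝒞 : CS E₁ L) (𝒟 : CS E₂ L) (R : Set E₁ → Set E₂ → Prop) : Prop :=
  IsSB 𝒞 𝒟 R ∧ ∀ X Y, R X Y →
    (∀ A X', RStep 𝒞 A X X' → ∃ Y', RStep 𝒟 A Y Y' ∧ R X' Y') ∧
    (∀ A Y', RStep 𝒟 A Y Y' → ∃ X', RStep 𝒞 A X X' ∧ R X' Y')

/-- Reverse homogeneous step bisimulation: matches forward single-event
transitions and reverse homogeneous steps. -/
def IsRHSB (𝒞 : CS E₁ L) (𝒟 : CS E₂ L) (R : Set E₁ → Set E₂ → Prop) : Prop :=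
  Dom 𝒞 𝒟 R ∧ ∀ X Y, R X Y →
    (∀ a X', FTrans 𝒞 a X X' → ∃ Y', FTrans 𝒟 a Y Y' ∧ R X' Y') ∧
    (∀ a Y', FTrans 𝒟 a Y Y' → ∃ X', FTrans 𝒞 a X X' ∧ R X' Y') ∧
    (∀ A X', Hom A → RStep 𝒞 A X X' → ∃ Y', RStep 𝒟 A Y Y' ∧ R X' Y') ∧
    (∀ A Y', Hom A → RStep 𝒟 A Y Y' → ∃ X', RStep 𝒞 A X X' ∧ R X' Y')

/-- Reverse homogeneous equidepth step bisimulation. -/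
def IsRHESB (𝒞 : CS E₁ L) (𝒟 : CS E₂ L) (R : Set E₁ → Set E₂ → Prop) : Prop :=
  Dom 𝒞 𝒟 R ∧ ∀ X Y, R X Y →
    (∀ a X', FTrans 𝒞 a X X' → ∃ Y', FTrans 𝒟 a Y Y' ∧ R X' Y') ∧
    (∀ a Y', FTrans 𝒟 a Y Y' → ∃ X', FTrans 𝒞 a X X' ∧ R X' Y') ∧
    (∀ A X', Hom A → REqStep 𝒞 A X X' → ∃ Y', REqStep 𝒟 A Y Y' ∧ R X' Y') ∧
    (∀ A Y', Hom A → REqStep 𝒟 A Y Y' → ∃ X', REqStep 𝒞 A X X' ∧ R X' Y')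

/-- Depth-respecting bisimulation. -/
def IsDB (𝒞 : CS E₁ L) (𝒟 : CS E₂ L) (R : Set E₁ → Set E₂ → Prop) : Prop :=
  Dom 𝒞 𝒟 R ∧ ∀ X Y, R X Y →
    (∀ a k X', FTransD 𝒞 a k X X' → ∃ Y', FTransD 𝒟 a k Y Y' ∧ R X' Y') ∧
    (∀ a k Y', FTransD 𝒟 a k Y Y' → ∃ X', FTransD 𝒞 a k X X' ∧ R X' Y')

/-- Reverse depth-respecting bisimulation. -/
def IsRDB (𝒞 : CS E₁ L) (𝒟 : CS E₂ L) (R : Set E₁ → Set E₂ → Prop) : Prop :=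
  IsDB 𝒞 𝒟 R ∧ ∀ X Y, R X Y →
    (∀ a k X', RTransD 𝒞 a k X X' → ∃ Y', RTransD 𝒟 a k Y Y' ∧ R X' Y') ∧
    (∀ a k Y', RTransD 𝒟 a k Y Y' → ∃ X', RTransD 𝒞 a k X X' ∧ R X' Y')

/-- The lifting of a configuration structure w.r.t. a configuration `M`. -/
def lift (𝒞 : CS E L) (M : Set E) : CS E L where
  C := {Z | ∃ X, X ∈ 𝒞.C ∧ M ⊆ X ∧ minE 𝒞 X = minE 𝒞 M ∧ Z = X \ M}
  finite := by
    rintro Z ⟨X, hX, -, -, rfl⟩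
    exact (𝒞.finite X hX).subset Set.diff_subset
  label := 𝒞.label

/-- Events of `X` of depth at most `n`. -/
def levelLe (𝒞 : CS E L) (X : Set E) (n : ℕ) : Set E :=
  {e | e ∈ X ∧ depth 𝒞 X e ≤ n}

/-- Events of `X` of depth exactly `n`. -/
def levelEq (𝒞 : CS E L) (X : Set E) (n : ℕ) : Set E :=
  {e | e ∈ X ∧ depth 𝒞 X e = n}

/-- No equidepth auto-concurrency: distinct concurrent events never share
both label and depth. -/
def NoEqAC (𝒞 : CS E L) : Prop :=
  ∀ X ∈ 𝒞.C, ∀ d ∈ X, ∀ e ∈ X, co 𝒞 X d e → 𝒞.label d = 𝒞.label e →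
    depth 𝒞 X d = depth 𝒞 X e → d = e

/-- `f` (a set of pairs) is a label- and order-preserving isomorphism
between configurations `X` and `Y`. -/
def IsIso (𝒞 : CS E₁ L) (𝒟 : CS E₂ L) (X : Set E₁) (Y : Set E₂)
    (f : Set (E₁ × E₂)) : Prop :=
  (∀ p ∈ f, p.1 ∈ X ∧ p.2 ∈ Y) ∧
  (∀ d ∈ X, ∃! e, (d, e) ∈ f) ∧
  (∀ e ∈ Y, ∃! d, (d, e) ∈ f) ∧
  (∀ p ∈ f, 𝒞.label p.1 = 𝒟.label p.2) ∧
  (∀ p ∈ f, ∀ q ∈ f, (lt 𝒞 X p.1 q.1 ↔ lt 𝒟 Y p.2 q.2))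

/-- Hereditary history-preserving bisimulation. -/
def IsHH (𝒞 : CS E₁ L) (𝒟 : CS E₂ L)
    (R : Set (Set E₁ × Set E₂ × Set (E₁ × E₂))) : Prop :=
  (∅, ∅, ∅) ∈ R ∧
  ∀ X Y f, (X, Y, f) ∈ R →
    X ∈ 𝒞.C ∧ Y ∈ 𝒟.C ∧ IsIso 𝒞 𝒟 X Y f ∧
    (∀ a X', FTrans 𝒞 a X X' → ∃ Y' f', FTrans 𝒟 a Y Y' ∧
      (X', Y', f') ∈ R ∧ {p ∈ f' | p.1 ∈ X} = f) ∧
    (∀ a Y', FTrans 𝒟 a Y Y' → ∃ X' f', FTrans 𝒞 a X X' ∧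
      (X', Y', f') ∈ R ∧ {p ∈ f' | p.1 ∈ X} = f) ∧
    (∀ a X', RTrans 𝒞 a X X' → ∃ Y' f', RTrans 𝒟 a Y Y' ∧
      (X', Y', f') ∈ R ∧ {p ∈ f | p.1 ∈ X'} = f')

end CS

open CS

lemma mem_interFold {E : Type u} (X : Set E) (l : List (Set E)) (d : E) :
    d ∈ l.foldr (· ∩ ·) X ↔ d ∈ X ∧ ∀ S ∈ l, d ∈ S := by
  induction l with
  | nil => simp
  | cons S l ih => simp [ih]; tauto

lemma mem_unionFold {E : Type u} (l : List (Set E)) (d : E) :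
    d ∈ l.foldr (· ∪ ·) (∅ : Set E) ↔ ∃ S ∈ l, d ∈ S := by
  induction l with
  | nil => simp
  | cons S l ih => simp [ih]

lemma interFold_mem {E : Type u} {L : Type v} (𝒞 : CS E L) (h : IsStable 𝒞)
    (X : Set E) (hX : X ∈ 𝒞.C) (l : List (Set E))
    (hl : ∀ S ∈ l, S ∈ 𝒞.C ∧ S ⊆ X) :
    l.foldr (· ∩ ·) X ∈ 𝒞.C ∧ l.foldr (· ∩ ·) X ⊆ X := by
  induction l with
  | nil => exact ⟨hX, subset_rfl⟩
  | cons S l ih =>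
    obtain ⟨hS, hSX⟩ := hl S List.mem_cons_self
    obtain ⟨h1, h2⟩ := ih (fun T hT => hl T (List.mem_cons_of_mem _ hT))
    have hsub : S ∪ l.foldr (· ∩ ·) X ⊆ X := Set.union_subset hSX h2
    exact ⟨h.2.2.2 S hS _ h1 X hX hsub, Set.inter_subset_right.trans h2⟩

lemma unionFold_mem {E : Type u} {L : Type v} (𝒞 : CS E L) (h : IsStable 𝒞)
    (X : Set E) (hX : X ∈ 𝒞.C) (l : List (Set E))
    (hl : ∀ S ∈ l, S ∈ 𝒞.C ∧ S ⊆ X) :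
    l.foldr (· ∪ ·) (∅ : Set E) ∈ 𝒞.C ∧ l.foldr (· ∪ ·) (∅ : Set E) ⊆ X := by
  induction l with
  | nil => exact ⟨h.1, by simp⟩
  | cons S l ih =>
    obtain ⟨hS, hSX⟩ := hl S List.mem_cons_self
    obtain ⟨h1, h2⟩ := ih (fun T hT => hl T (List.mem_cons_of_mem _ hT))
    have hsub : S ∪ l.foldr (· ∪ ·) ∅ ⊆ X := Set.union_subset hSX h2
    exact ⟨h.2.2.1 S hS _ h1 X hX hsub, hsub⟩

/-- The causal downward closure of `e` inside `X` is a configuration. -/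
lemma down_mem {E : Type u} {L : Type v} (𝒞 : CS E L) (h : IsStable 𝒞)
    (X : Set E) (hX : X ∈ 𝒞.C) (e : E) :
    {d | d ∈ X ∧ le 𝒞 X d e} ∈ 𝒞.C := by
  classical
  have hXfin : X.Finite := 𝒞.finite X hX
  have hFfin : {Z | Z ∈ 𝒞.C ∧ Z ⊆ X ∧ e ∈ Z}.Finite :=
    hXfin.finite_subsets.subset (fun Z hZ => hZ.2.1)
  set l := hFfin.toFinset.toList with hl
  have hmeml : ∀ Z, Z ∈ l ↔ (Z ∈ 𝒞.C ∧ Z ⊆ X ∧ e ∈ Z) := by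
    intro Z
    rw [hl, Finset.mem_toList, Set.Finite.mem_toFinset]
    rfl
  have heq : {d | d ∈ X ∧ le 𝒞 X d e} = l.foldr (· ∩ ·) X := by
    ext d
    rw [mem_interFold]
    constructor
    · rintro ⟨hdX, hle⟩
      refine ⟨hdX, fun Z hZ => ?_⟩
      obtain ⟨hZC, hZX, heZ⟩ := (hmeml Z).1 hZ
      exact hle Z hZC hZX heZ
    · rintro ⟨hdX, hall⟩
      refine ⟨hdX, fun Z hZC hZX heZ => hall Z ((hmeml Z).2 ⟨hZC, hZX, heZ⟩)⟩
  rw [heq]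
  exact (interFold_mem 𝒞 h X hX l (fun S hS => ⟨((hmeml S).1 hS).1, ((hmeml S).1 hS).2.1⟩)).1

/-- a subset `Y ⊆ X` of a configuration is a configuration iff it is
left-closed w.r.t. `<_X`. -/
theorem stmt1 {E : Type u} {L : Type v} (𝒞 : CS E L) (h : IsStable 𝒞)
    (X : Set E) (hX : X ∈ 𝒞.C) (Y : Set E) (hYX : Y ⊆ X) :
    Y ∈ 𝒞.C ↔ (∀ d e, e ∈ Y → lt 𝒞 X d e → d ∈ Y) := by
  classical
  constructor
  · intro hY d e heY hlt
    exact hlt.1 Y hY hYX heY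
  · intro hclosed
    have hYfin : Y.Finite := (𝒞.finite X hX).subset hYX
    set down : E → Set E := fun e => {d | d ∈ X ∧ le 𝒞 X d e} with hdown
    have hdownC : ∀ e, down e ∈ 𝒞.C := fun e => down_mem 𝒞 h X hX e
    have hdownX : ∀ e, down e ⊆ X := fun e d hd => hd.1
    have hdownY : ∀ e ∈ Y, down e ⊆ Y := by
      intro e he d hd
      by_cases hde : d = e
      · exact hde ▸ he
      · exact hclosed d e he ⟨hd.2, hde⟩
    set lY := hYfin.toFinset.toList with hlY
    have hmemlY : ∀ e, e ∈ lY ↔ e ∈ Y := by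
      intro e; rw [hlY, Finset.mem_toList, Set.Finite.mem_toFinset]
    have heq : Y = (lY.map down).foldr (· ∪ ·) ∅ := by
      ext d
      rw [mem_unionFold]
      constructor
      · intro hdY
        exact ⟨down d, List.mem_map_of_mem (f := down) ((hmemlY d).2 hdY),
          ⟨hYX hdY, fun Z _ _ hdZ => hdZ⟩⟩
      · rintro ⟨S, hS, hdS⟩
        obtain ⟨e, helY, rfl⟩ := List.mem_map.1 hS
        exact hdownY e ((hmemlY e).1 helY) hdS
    rw [heq]
    refine (unionFold_mem 𝒞 h X hX _ ?_).1
    intro S hS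
    obtain ⟨e, _, rfl⟩ := List.mem_map.1 hS
    exact ⟨hdownC e, hdownX e⟩
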